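/- Let x, y ∈ ℂ^{n×r} both have full rank r, and let U ∈ U(r) be such that x* y U is positive semidefinite. Then for every t ∈ [0,1] the matrix (1−t) x + t y U has full rank r. Consequently, the Bures–Wasserstein geodesic γ(t) = ((1−t)x + t y U)((1−t)x + t y U)* connecting x x* to y y* stays within the set of positive semidefinite Hermitian matrices of rank exactly r. -/

import Mathlib

open Matrix Filter
open scoped ComplexOrder

noncomputable def frob {p q : ℕ} (x : Matrix (Fin p) (Fin q) ℂ) : ℝ :=
  Real.sqrt (Matrix.trace (xᴴ * x)).re

noncomputable def rinner {p q : ℕ} (X Y : Matrix (Fin p) (Fin q) ℂ) : ℝ :=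
  (Matrix.trace (Xᴴ * Y)).re

/-- The former `Matrix.PosSemidef.sqrt` (removed from Mathlib), with its old definition. -/
noncomputable def psdSqrt {m : Type*} [Fintype m] [DecidableEq m] {A : Matrix m m ℂ}
    (hA : A.PosSemidef) : Matrix m m ℂ :=
  (hA.1.eigenvectorUnitary : Matrix m m ℂ) * diagonal ((↑) ∘ Real.sqrt ∘ hA.1.eigenvalues) *
    (star (hA.1.eigenvectorUnitary : Matrix m m ℂ))

noncomputable def nuclear {p q : ℕ} (x : Matrix (Fin p) (Fin q) ℂ) : ℝ :=
  (Matrix.trace (psdSqrt (Matrix.posSemidef_conjTranspose_mul_self x))).re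

noncomputable def theta {n r : ℕ} (x : Matrix (Fin n) (Fin r) ℂ) : Matrix (Fin n) (Fin n) ℂ :=
  psdSqrt (Matrix.posSemidef_self_mul_conjTranspose x)

noncomputable def psi {n r : ℕ} (x : Matrix (Fin n) (Fin r) ℂ) : Matrix (Fin n) (Fin n) ℂ :=
  frob x • theta x

noncomputable def Dmet {n r : ℕ} (x y : Matrix (Fin n) (Fin r) ℂ) : ℝ :=
  ⨅ U : Matrix.unitaryGroup (Fin r) ℂ, frob (x - y * (U : Matrix (Fin r) (Fin r) ℂ))

noncomputable def dmet {n r : ℕ} (x y : Matrix (Fin n) (Fin r) ℂ) : ℝ :=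
  ⨅ U : Matrix.unitaryGroup (Fin r) ℂ,
    frob (x - y * (U : Matrix (Fin r) (Fin r) ℂ)) * frob (x + y * (U : Matrix (Fin r) (Fin r) ℂ))


lemma full_rank_inj {n r : ℕ} (x : Matrix (Fin n) (Fin r) ℂ) (hx : x.rank = r)
    {v : Fin r → ℂ} (hv : x *ᵥ v = 0) : v = 0 := by
  have hker : LinearMap.ker x.mulVecLin = ⊥ := by
    have h := x.mulVecLin.finrank_range_add_finrank_ker
    rw [show Module.finrank ℂ (Fin r → ℂ) = r by simp] at h
    rw [Matrix.rank] at hx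
    have : Module.finrank ℂ (LinearMap.ker x.mulVecLin) = 0 := by omega
    exact Submodule.finrank_eq_zero.mp this
  have : v ∈ LinearMap.ker x.mulVecLin := by simpa [Matrix.mulVecLin_apply] using hv
  simpa [hker] using this

lemma ofReal_mul_re' (c : ℝ) (d : ℂ) : ((c:ℂ) * d).re = c * d.re := by
  simp [Complex.mul_re]

lemma nonneg_re_eq_zero {d : ℂ} (hd : 0 ≤ d) (hre : d.re = 0) : d = 0 := by
  rw [Complex.le_def] at hd
  exact Complex.ext (by simpa using hre) (by simpa using hd.2.symm)

/-- if `x, y ∈ ℂ^{n×r}` are full rank and `U ∈ U(r)` is such that `x* y U`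
is positive semidefinite, then `(1−t) x + t y U` has full rank `r` for every `t ∈ [0,1]`;
consequently the Bures–Wasserstein geodesic
`γ(t) = ((1−t)x + t y U)((1−t)x + t y U)*` stays in the positive semidefinite Hermitian
matrices of rank exactly `r`. -/
theorem geodesic_rank_preserving (n r : ℕ) (x y : Matrix (Fin n) (Fin r) ℂ)
    (hx : x.rank = r) (hy : y.rank = r)
    (U : Matrix (Fin r) (Fin r) ℂ) (hU : U ∈ Matrix.unitaryGroup (Fin r) ℂ)
    (hpsd : (xᴴ * y * U).PosSemidef) :
    ∀ t : ℝ, t ∈ Set.Icc (0 : ℝ) 1 →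
      ((1 - t) • x + t • (y * U)).rank = r ∧
      ((((1 - t) • x + t • (y * U)) * ((1 - t) • x + t • (y * U))ᴴ).PosSemidef ∧
        (((1 - t) • x + t • (y * U)) * ((1 - t) • x + t • (y * U))ᴴ).rank = r) := by
  intro t ht
  obtain ⟨ht0, ht1⟩ := ht
  set w : Matrix (Fin n) (Fin r) ℂ := y * U with hw
  set z : Matrix (Fin n) (Fin r) ℂ := (1 - t) • x + t • w with hz
  -- w has full rank
  have hUunit : IsUnit U :=
    ⟨⟨U, star U, Matrix.mem_unitaryGroup_iff.mp hU, Matrix.mem_unitaryGroup_iff'.mp hU⟩, rfl⟩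
  have hwrank : w.rank = r := by
    have h1 : w.rank ≤ y.rank := Matrix.rank_mul_le_left y U
    have h2 : y.rank ≤ w.rank := by
      have : y = w * U⁻¹ := by
        rw [hw, Matrix.mul_assoc, Matrix.mul_nonsing_inv _ (hUunit.map (Matrix.detMonoidHom))]
        simp
      calc y.rank = (w * U⁻¹).rank := by rw [← this]
        _ ≤ w.rank := Matrix.rank_mul_le_left w U⁻¹
    omega
  -- key injectivity
  have hinj : ∀ v : Fin r → ℂ, z *ᵥ v = 0 → v = 0 := by
    intro v hv
    set a : Fin n → ℂ := x *ᵥ v with ha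
    set b : Fin n → ℂ := w *ᵥ v with hb
    have hv' : ((1 - t : ℝ) : ℂ) • a + ((t : ℝ) : ℂ) • b = 0 := by
      have : z *ᵥ v = (1 - t) • a + t • b := by
        rw [hz, Matrix.add_mulVec, Matrix.smul_mulVec, Matrix.smul_mulVec]
      rw [this] at hv
      convert hv using 2 <;> funext i <;> simp [Complex.real_smul]
    set da : ℂ := star a ⬝ᵥ a with hda
    set db : ℂ := star a ⬝ᵥ b with hdb
    set dc : ℂ := star b ⬝ᵥ b with hdc
    have hda0 : 0 ≤ da := dotProduct_star_self_nonneg a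
    have hdc0 : 0 ≤ dc := dotProduct_star_self_nonneg b
    have hdb_eq : db = star v ⬝ᵥ (xᴴ * y * U) *ᵥ v := by
      rw [hdb, ha, hb, hw]
      simp [Matrix.star_mulVec, Matrix.dotProduct_mulVec, Matrix.vecMul_vecMul,
        Matrix.mul_assoc]
    have hdb0 : 0 ≤ db := hdb_eq ▸ hpsd.dotProduct_mulVec_nonneg v
    have key : 0 = ((1-t:ℝ):ℂ)^2 * da + ((1-t:ℝ):ℂ) * (t:ℂ) * db
        + (t:ℂ) * ((1-t:ℝ):ℂ) * (starRingEnd ℂ db) + (t:ℂ)^2 * dc := by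
      have h0 : star (((1 - t : ℝ) : ℂ) • a + ((t : ℝ) : ℂ) • b) ⬝ᵥ
          (((1 - t : ℝ) : ℂ) • a + ((t : ℝ) : ℂ) • b) = 0 := by
        rw [hv']; simp
      rw [star_add, star_smul, star_smul] at h0
      simp only [add_dotProduct, dotProduct_add, smul_dotProduct,
        dotProduct_smul, smul_eq_mul, star_trivial] at h0
      rw [← h0, hda, hdb, hdc]
      have hsa : star ((1 - t : ℝ) : ℂ) = ((1-t:ℝ):ℂ) := by simp [Complex.star_def]
      have hsb : star ((t : ℝ) : ℂ) = ((t:ℝ):ℂ) := by simp [Complex.star_def]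
      have hba : star b ⬝ᵥ a = starRingEnd ℂ (star a ⬝ᵥ b) := by
        simp [dotProduct, map_sum, mul_comm]
      rw [hsa, hsb, hba]
      ring
    -- real version
    have e1 : (((1-t:ℝ):ℂ)^2 * da).re = (1-t)^2 * da.re := by
      rw [← Complex.ofReal_pow, ofReal_mul_re']
    have e2 : (((1-t:ℝ):ℂ) * (t:ℂ) * db).re = (1-t) * t * db.re := by
      rw [← Complex.ofReal_mul, ofReal_mul_re']
    have e3 : ((t:ℂ) * ((1-t:ℝ):ℂ) * (starRingEnd ℂ db)).re = t * (1-t) * db.re := by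
      rw [← Complex.ofReal_mul, ofReal_mul_re', Complex.conj_re]
    have e4 : ((t:ℂ)^2 * dc).re = t^2 * dc.re := by
      rw [← Complex.ofReal_pow, ofReal_mul_re']
    have hre : 0 = (1-t)^2 * da.re + 2 * (t * (1-t)) * db.re + t^2 * dc.re := by
      have h := congrArg Complex.re key
      simp only [Complex.add_re, e1, e2, e3, e4, Complex.zero_re] at h
      rw [h]; ring
    have hdare : 0 ≤ da.re := by rw [Complex.le_def] at hda0; simpa using hda0.1
    have hdbre : 0 ≤ db.re := by rw [Complex.le_def] at hdb0; simpa using hdb0.1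
    have hdcre : 0 ≤ dc.re := by rw [Complex.le_def] at hdc0; simpa using hdc0.1
    rcases eq_or_lt_of_le ht1 with h1 | h1
    · -- t = 1 : dc = 0
      subst h1
      have : dc.re = 0 := by simpa using hre.symm
      have hb0 : b = 0 := dotProduct_star_self_eq_zero.mp (nonneg_re_eq_zero hdc0 this)
      exact full_rank_inj w hwrank hb0
    · -- t < 1 : da = 0
      have hc1 : 0 ≤ (1-t)^2 * da.re := by positivity
      have hc2 : 0 ≤ 2 * (t * (1-t)) * db.re := by
        have ht' : 0 ≤ t * (1 - t) := mul_nonneg ht0 (by linarith)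
        have : 0 ≤ 2 * (t * (1-t)) := by linarith
        exact mul_nonneg this hdbre
      have hc3 : 0 ≤ t^2 * dc.re := mul_nonneg (sq_nonneg t) hdcre
      have h1' : (0:ℝ) < (1-t)^2 := pow_pos (by linarith) 2
      have : da.re = 0 := le_antisymm (by nlinarith) hdare
      have ha0 : a = 0 := dotProduct_star_self_eq_zero.mp (nonneg_re_eq_zero hda0 this)
      exact full_rank_inj x hx ha0
  -- z has full rank via PosDef of zᴴ z
  have hpd : (zᴴ * z).PosDef := by
    refine Matrix.PosDef.of_dotProduct_mulVec_pos (Matrix.posSemidef_conjTranspose_mul_self z).isHermitian fun v hv => ?_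
    have hle := (Matrix.posSemidef_conjTranspose_mul_self z).dotProduct_mulVec_nonneg v
    refine lt_of_le_of_ne hle fun h => hv ?_
    have : star v ⬝ᵥ (zᴴ * z) *ᵥ v = star (z *ᵥ v) ⬝ᵥ (z *ᵥ v) := by
      rw [← Matrix.mulVec_mulVec, Matrix.dotProduct_mulVec (star v), ← Matrix.star_mulVec]
    rw [this] at h
    exact hinj v (dotProduct_star_self_eq_zero.mp h.symm)
  have hzrank : z.rank = r := by
    have hdet : IsUnit (zᴴ * z).det := by
      have := hpd.det_pos
      exact isUnit_iff_ne_zero.mpr (by exact_mod_cast this.ne')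
    have := Matrix.rank_of_isUnit (zᴴ * z) ((Matrix.isUnit_iff_isUnit_det _).mpr hdet)
    rw [← Matrix.rank_conjTranspose_mul_self z, this, Fintype.card_fin]
  refine ⟨hzrank, Matrix.posSemidef_self_mul_conjTranspose z, ?_⟩
  rw [Matrix.rank_self_mul_conjTranspose]; exact hzrank
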